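/- Let ẽ = e − E s_K + A s_K^c, where s_K is the best K-term approximation of s ≠ 0 and s_K^c = s − s_K. With ε_y = ‖e‖₂/‖A s‖₂, ε_A^{(K)} = ‖E‖₂^{(K)}/‖A‖₂^{(K)}, r_K = ‖s_K^c‖₂/‖s‖₂, s_K' = ‖s_K^c‖₁/(√K‖s‖₂), and assuming A satisfies RIP of order K, then ‖ẽ‖₂ ≤ ‖A‖₂^{(K)} ‖s‖₂ · (ε_y + ε_A^{(K)} + (1+ε_y)(r_K + s_K')). -/

import Mathlib

open Matrix Finset

/-- The ℓ₂ norm of a finite real vector. -/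
noncomputable def l2 {n : ℕ} (v : Fin n → ℝ) : ℝ := Real.sqrt (∑ i, (v i) ^ 2)

/-- The ℓ₁ norm of a finite real vector. -/
noncomputable def l1 {n : ℕ} (v : Fin n → ℝ) : ℝ := ∑ i, |v i|

/-- A vector is `K`-sparse if it has at most `K` nonzero entries. -/
def IsSparse {n : ℕ} (K : ℕ) (v : Fin n → ℝ) : Prop :=
  ∃ S : Finset (Fin n), S.card ≤ K ∧ ∀ i ∉ S, v i = 0

/-- `A` satisfies the RIP of order `K` with constant `δ`. -/
def SatisfiesRIP {m n : ℕ} (A : Matrix (Fin m) (Fin n) ℝ) (K : ℕ) (δ : ℝ) : Prop :=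
  ∀ v : Fin n → ℝ, IsSparse K v →
    (1 - δ) * (l2 v) ^ 2 ≤ (l2 (A.mulVec v)) ^ 2 ∧
      (l2 (A.mulVec v)) ^ 2 ≤ (1 + δ) * (l2 v) ^ 2

/-- Spectral norm (ℓ₂ operator norm) of a matrix. -/
noncomputable def specNorm {m n : ℕ} (A : Matrix (Fin m) (Fin n) ℝ) : ℝ :=
  sSup {c | ∃ v : Fin n → ℝ, l2 v ≤ 1 ∧ c = l2 (A.mulVec v)}

/-- The matrix with the columns of `A` indexed by `S` kept and all other columns zeroed,
representing the column-submatrix `A_S`. -/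
def colRestrict {m n : ℕ} (A : Matrix (Fin m) (Fin n) ℝ) (S : Finset (Fin n)) :
    Matrix (Fin m) (Fin n) ℝ := fun i j => if j ∈ S then A i j else 0

/-- `‖A‖₂^{(K)}`: the largest spectral norm over all `K`-column submatrices of `A`. -/
noncomputable def subNorm {m n : ℕ} (A : Matrix (Fin m) (Fin n) ℝ) (K : ℕ) : ℝ :=
  sSup {c | ∃ S : Finset (Fin n), S.card = K ∧ c = specNorm (colRestrict A S)}

/-- The pseudo-inverse `(BᵀB)⁻¹Bᵀ` of a full-column-rank matrix `B`. -/
noncomputable def pinv {m k : ℕ} (B : Matrix (Fin m) (Fin k) ℝ) : Matrix (Fin k) (Fin m) ℝ :=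
  (Bᵀ * B)⁻¹ * Bᵀ

/-- `sK` is a best `K`-term (ℓ₂) approximation of `s`. -/
def IsBestApprox {n : ℕ} (K : ℕ) (s sK : Fin n → ℝ) : Prop :=
  IsSparse K sK ∧ ∀ t : Fin n → ℝ, IsSparse K t → l2 (s - sK) ≤ l2 (s - t)

/-- Embed a vector indexed by `Fin k` into `Fin n` along an injection `f` (zero elsewhere). -/
noncomputable def embedVec {k n : ℕ} (f : Fin k → Fin n) (w : Fin k → ℝ) : Fin n → ℝ :=
  fun j => ∑ i, if f i = j then w i else 0

lemma l2_eq_norm {n : ℕ} (v : Fin n → ℝ) :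
    l2 v = ‖(WithLp.toLp 2 v : EuclideanSpace ℝ (Fin n))‖ := by
  rw [EuclideanSpace.norm_eq]
  simp [l2, Real.norm_eq_abs, sq_abs]

lemma l2_nonneg {n : ℕ} (v : Fin n → ℝ) : 0 ≤ l2 v := Real.sqrt_nonneg _

lemma l2_add_le {n : ℕ} (u v : Fin n → ℝ) : l2 (u + v) ≤ l2 u + l2 v := by
  rw [l2_eq_norm, l2_eq_norm, l2_eq_norm]
  simpa using norm_add_le (WithLp.toLp 2 u : EuclideanSpace ℝ (Fin n)) (WithLp.toLp 2 v)

lemma l2_sub_le {n : ℕ} (u v : Fin n → ℝ) : l2 (u - v) ≤ l2 u + l2 v := by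
  rw [l2_eq_norm, l2_eq_norm, l2_eq_norm]
  simpa using norm_sub_le (WithLp.toLp 2 u : EuclideanSpace ℝ (Fin n)) (WithLp.toLp 2 v)

lemma l2_smul {n : ℕ} (c : ℝ) (v : Fin n → ℝ) : l2 (c • v) = |c| * l2 v := by
  rw [l2_eq_norm, l2_eq_norm]
  have := norm_smul c (WithLp.toLp 2 v : EuclideanSpace ℝ (Fin n))
  simpa [Real.norm_eq_abs] using this

lemma l2_eq_zero {n : ℕ} {v : Fin n → ℝ} (h : l2 v = 0) : v = 0 := by
  rw [l2_eq_norm] at h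
  have : (WithLp.toLp 2 v : EuclideanSpace ℝ (Fin n)) = 0 := norm_eq_zero.mp h
  simpa using congrArg WithLp.ofLp this

lemma l2_pos {n : ℕ} {v : Fin n → ℝ} (h : v ≠ 0) : 0 < l2 v := by
  rcases lt_or_eq_of_le (l2_nonneg v) with h' | h'
  · exact h'
  · exact absurd (l2_eq_zero h'.symm) h

lemma l2_sq {n : ℕ} (v : Fin n → ℝ) : (l2 v) ^ 2 = ∑ i, (v i) ^ 2 :=
  Real.sq_sqrt (by positivity)

lemma l2_mulVec_le_frob {m n : ℕ} (M : Matrix (Fin m) (Fin n) ℝ) (v : Fin n → ℝ) :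
    l2 (M.mulVec v) ≤ Real.sqrt (∑ i, ∑ j, (M i j) ^ 2) * l2 v := by
  have h1 : (l2 (M.mulVec v)) ^ 2 ≤ (∑ i, ∑ j, (M i j) ^ 2) * (l2 v) ^ 2 := by
    rw [l2_sq, l2_sq, Finset.sum_mul]
    apply Finset.sum_le_sum
    intro i _
    exact Finset.sum_mul_sq_le_sq_mul_sq univ (fun j => M i j) v
  have h2 := Real.sqrt_le_sqrt h1
  rw [Real.sqrt_sq (l2_nonneg _), Real.sqrt_mul (by positivity), Real.sqrt_sq (l2_nonneg _)] at h2
  exact h2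

lemma specNorm_bddAbove {m n : ℕ} (M : Matrix (Fin m) (Fin n) ℝ) :
    BddAbove {c | ∃ v : Fin n → ℝ, l2 v ≤ 1 ∧ c = l2 (M.mulVec v)} := by
  refine ⟨Real.sqrt (∑ i, ∑ j, (M i j) ^ 2), ?_⟩
  rintro c ⟨v, hv, rfl⟩
  calc l2 (M.mulVec v) ≤ Real.sqrt (∑ i, ∑ j, (M i j) ^ 2) * l2 v := l2_mulVec_le_frob M v
    _ ≤ Real.sqrt (∑ i, ∑ j, (M i j) ^ 2) * 1 := by
        exact mul_le_mul_of_nonneg_left hv (Real.sqrt_nonneg _)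
    _ = _ := mul_one _

lemma specNorm_nonneg {m n : ℕ} (M : Matrix (Fin m) (Fin n) ℝ) : 0 ≤ specNorm M := by
  apply le_csSup (specNorm_bddAbove M)
  refine ⟨0, ?_, ?_⟩
  · simp [l2]
  · simp [l2, Matrix.mulVec_zero]

lemma l2_mulVec_le_spec {m n : ℕ} (M : Matrix (Fin m) (Fin n) ℝ) (v : Fin n → ℝ) :
    l2 (M.mulVec v) ≤ specNorm M * l2 v := by
  by_cases hv : v = 0
  · subst hv; simp [Matrix.mulVec_zero, l2, mul_comm]
  · have hpos := l2_pos hv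
    set u := (l2 v)⁻¹ • v with hu
    have hl2u : l2 u = 1 := by
      rw [hu, l2_smul, abs_of_pos (by positivity)]
      field_simp
    have hmem : l2 (M.mulVec u) ∈ {c | ∃ v : Fin n → ℝ, l2 v ≤ 1 ∧ c = l2 (M.mulVec v)} :=
      ⟨u, le_of_eq hl2u, rfl⟩
    have hle : l2 (M.mulVec u) ≤ specNorm M := le_csSup (specNorm_bddAbove M) hmem
    have : l2 (M.mulVec u) = (l2 v)⁻¹ * l2 (M.mulVec v) := by
      rw [hu, Matrix.mulVec_smul, l2_smul, abs_of_pos (by positivity)]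
    rw [this] at hle
    calc l2 (M.mulVec v) = l2 v * ((l2 v)⁻¹ * l2 (M.mulVec v)) := by field_simp
      _ ≤ l2 v * specNorm M := mul_le_mul_of_nonneg_left hle (le_of_lt hpos)
      _ = specNorm M * l2 v := mul_comm _ _

lemma subNorm_bddAbove {m n : ℕ} (A : Matrix (Fin m) (Fin n) ℝ) (K : ℕ) :
    BddAbove {c | ∃ S : Finset (Fin n), S.card = K ∧ c = specNorm (colRestrict A S)} := by
  have : {c | ∃ S : Finset (Fin n), S.card = K ∧ c = specNorm (colRestrict A S)} =
      (fun S : Finset (Fin n) => specNorm (colRestrict A S)) '' {S | S.card = K} := by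
    ext c
    simp only [Set.mem_setOf_eq, Set.mem_image]
    constructor
    · rintro ⟨S, h1, h2⟩; exact ⟨S, h1, h2.symm⟩
    · rintro ⟨S, h1, h2⟩; exact ⟨S, h1, h2.symm⟩
  rw [this]
  exact (Set.toFinite _).image _ |>.bddAbove

lemma le_subNorm {m n : ℕ} (A : Matrix (Fin m) (Fin n) ℝ) {K : ℕ} {S : Finset (Fin n)}
    (hS : S.card = K) : specNorm (colRestrict A S) ≤ subNorm A K :=
  le_csSup (subNorm_bddAbove A K) ⟨S, hS, rfl⟩

lemma subNorm_nonneg {m n : ℕ} (A : Matrix (Fin m) (Fin n) ℝ) {K : ℕ} (hKn : K ≤ n) :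
    0 ≤ subNorm A K := by
  obtain ⟨S, -, hS⟩ := Finset.exists_superset_card_eq (s := (∅ : Finset (Fin n)))
    (by simp) (by simpa using hKn)
  exact le_trans (specNorm_nonneg _) (le_subNorm A hS)

lemma colRestrict_mulVec {m n : ℕ} (A : Matrix (Fin m) (Fin n) ℝ) (S : Finset (Fin n))
    (v : Fin n → ℝ) (hv : ∀ j ∉ S, v j = 0) :
    (colRestrict A S).mulVec v = A.mulVec v := by
  funext i
  unfold Matrix.mulVec dotProduct colRestrict
  apply Finset.sum_congr rfl
  intro j _
  by_cases hj : j ∈ S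
  · simp [hj]
  · simp [hj, hv j hj]

lemma l2_mulVec_sparse {m n : ℕ} (B : Matrix (Fin m) (Fin n) ℝ) {K : ℕ} (hKn : K ≤ n)
    {v : Fin n → ℝ} (hv : IsSparse K v) :
    l2 (B.mulVec v) ≤ subNorm B K * l2 v := by
  obtain ⟨S, hcard, hsupp⟩ := hv
  obtain ⟨T, hST, hT⟩ := Finset.exists_superset_card_eq hcard (by simpa using hKn)
  have hsupp' : ∀ j ∉ T, v j = 0 := fun j hj => hsupp j (fun hjS => hj (hST hjS))
  calc l2 (B.mulVec v) = l2 ((colRestrict B T).mulVec v) := by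
        rw [colRestrict_mulVec B T v hsupp']
    _ ≤ specNorm (colRestrict B T) * l2 v := l2_mulVec_le_spec _ _
    _ ≤ subNorm B K * l2 v := mul_le_mul_of_nonneg_right (le_subNorm B hT) (l2_nonneg v)

lemma exists_topK {n K : ℕ} (hKn : K ≤ n) (w : Fin n → ℝ) :
    ∃ S : Finset (Fin n), S.card = K ∧ (∀ i ∉ S, ∀ j ∈ S, |w i| ≤ |w j|) ∧
      (∀ T : Finset (Fin n), T.card = K → ∑ j ∈ T, |w j| ≤ ∑ j ∈ S, |w j|) := by
  have hne : ((univ : Finset (Finset (Fin n))).filter (fun S => S.card = K)).Nonempty := by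
    obtain ⟨S, -, hS⟩ := Finset.exists_superset_card_eq (s := (∅ : Finset (Fin n)))
      (by simp) (by simpa using hKn)
    exact ⟨S, by simp [hS]⟩
  obtain ⟨S, hSmem, hSmax⟩ := Finset.exists_max_image _ (fun S => ∑ j ∈ S, |w j|) hne
  have hScard : S.card = K := (Finset.mem_filter.mp hSmem).2
  refine ⟨S, hScard, ?_, ?_⟩
  · intro i hi j hj
    have hij : i ∉ S.erase j := fun h => hi (Finset.mem_of_mem_erase h)
    set S' := insert i (S.erase j) with hS'
    have hKpos : 0 < K := hScard ▸ Finset.card_pos.mpr ⟨j, hj⟩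
    have hcard' : S'.card = K := by
      rw [hS', Finset.card_insert_of_notMem hij, Finset.card_erase_of_mem hj, hScard]
      omega
    have hmem' : S' ∈ (univ : Finset (Finset (Fin n))).filter (fun S => S.card = K) := by
      simp [hcard']
    have hle := hSmax S' hmem'
    have hsum' : ∑ k ∈ S', |w k| = |w i| + ∑ k ∈ S.erase j, |w k| :=
      Finset.sum_insert hij
    have hsumS : ∑ k ∈ S, |w k| = |w j| + ∑ k ∈ S.erase j, |w k| :=
      (Finset.add_sum_erase _ _ hj).symm
    simp only [hsum', hsumS] at hle
    linarith
  · intro T hT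
    exact hSmax T (by simp [hT])

lemma l1_nonneg {n : ℕ} (v : Fin n → ℝ) : 0 ≤ l1 v :=
  Finset.sum_nonneg fun i _ => abs_nonneg _

lemma l2_restrict_le {n : ℕ} (w : Fin n → ℝ) (S : Finset (Fin n)) :
    l2 (fun i => if i ∈ S then w i else 0) ≤ l2 w := by
  apply Real.sqrt_le_sqrt
  apply Finset.sum_le_sum
  intro i _
  by_cases hi : i ∈ S <;> simp [hi] <;> positivity

lemma l2_le_sqrt_card {n : ℕ} (w : Fin n → ℝ) (S : Finset (Fin n))
    (hs : ∀ i ∉ S, w i = 0) (c : ℝ) (hc : 0 ≤ c) (hbd : ∀ i, |w i| ≤ c) :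
    l2 w ≤ Real.sqrt S.card * c := by
  have h1 : ∑ i, (w i) ^ 2 = ∑ i ∈ S, (w i) ^ 2 := by
    rw [← Finset.sum_subset (Finset.subset_univ S)]
    intro i _ hi
    rw [hs i hi]; ring
  have h2 : ∑ i ∈ S, (w i) ^ 2 ≤ S.card * c ^ 2 := by
    calc ∑ i ∈ S, (w i) ^ 2 ≤ ∑ _i ∈ S, c ^ 2 := by
          apply Finset.sum_le_sum
          intro i _
          calc (w i) ^ 2 = |w i| ^ 2 := (sq_abs _).symm
            _ ≤ c ^ 2 := by apply pow_le_pow_left₀ (abs_nonneg _) (hbd i)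
      _ = S.card * c ^ 2 := by rw [Finset.sum_const, nsmul_eq_mul]
  calc l2 w ≤ Real.sqrt (S.card * c ^ 2) := Real.sqrt_le_sqrt (h1 ▸ h2)
    _ = Real.sqrt S.card * c := by
        rw [Real.sqrt_mul (by positivity), Real.sqrt_sq hc]

/-- A `K`-sparse-friendly bound for general vectors via ℓ∞ and ℓ₁. -/
lemma lemB {m n : ℕ} (A : Matrix (Fin m) (Fin n) ℝ) {K : ℕ} (hK : 0 < K) (hKn : K ≤ n) :
    ∀ N : ℕ, ∀ w : Fin n → ℝ, ((univ : Finset (Fin n)).filter fun i => w i ≠ 0).card ≤ N →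
    ∀ c : ℝ, 0 ≤ c → (∀ i, |w i| ≤ c) →
    l2 (A.mulVec w) ≤ subNorm A K * (Real.sqrt K * c + l1 w / Real.sqrt K) := by
  have hsqK : (0:ℝ) < Real.sqrt K :=
    Real.sqrt_pos.mpr (by exact_mod_cast hK)
  -- the "sparse" case used in both base and inductive steps
  have sparse_case : ∀ w : Fin n → ℝ,
      ((univ : Finset (Fin n)).filter fun i => w i ≠ 0).card ≤ K →
      ∀ c : ℝ, 0 ≤ c → (∀ i, |w i| ≤ c) →
      l2 (A.mulVec w) ≤ subNorm A K * (Real.sqrt K * c + l1 w / Real.sqrt K) := by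
    intro w hcard c hc hbd
    have hsp : IsSparse K w := ⟨_, hcard, fun i hi => by simpa using hi⟩
    have h1 : l2 (A.mulVec w) ≤ subNorm A K * l2 w := l2_mulVec_sparse A hKn hsp
    have h2 : l2 w ≤ Real.sqrt K * c := by
      have := l2_le_sqrt_card w (univ.filter fun i => w i ≠ 0)
        (fun i hi => by simpa using hi) c hc hbd
      calc l2 w ≤ Real.sqrt ((univ.filter fun i => w i ≠ 0).card) * c := this
        _ ≤ Real.sqrt K * c := by
            apply mul_le_mul_of_nonneg_right _ hc
            exact Real.sqrt_le_sqrt (by exact_mod_cast hcard)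
    have h3 : 0 ≤ l1 w / Real.sqrt K := div_nonneg (l1_nonneg w) hsqK.le
    calc l2 (A.mulVec w) ≤ subNorm A K * l2 w := h1
      _ ≤ subNorm A K * (Real.sqrt K * c) :=
          mul_le_mul_of_nonneg_left h2 (subNorm_nonneg A hKn)
      _ ≤ subNorm A K * (Real.sqrt K * c + l1 w / Real.sqrt K) := by
          apply mul_le_mul_of_nonneg_left _ (subNorm_nonneg A hKn)
          linarith
  intro N
  induction N with
  | zero =>
    intro w hcard c hc hbd
    exact sparse_case w (le_trans hcard (Nat.zero_le K)) c hc hbd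
  | succ N ih =>
    intro w hcard c hc hbd
    by_cases hsmall : ((univ : Finset (Fin n)).filter fun i => w i ≠ 0).card ≤ K
    · exact sparse_case w hsmall c hc hbd
    · push_neg at hsmall
      obtain ⟨S, hScard, hStop, hSmax⟩ := exists_topK hKn w
      set wS : Fin n → ℝ := fun i => if i ∈ S then w i else 0 with hwS
      set w' : Fin n → ℝ := fun i => if i ∈ S then 0 else w i with hw'
      have hsplit : w = wS + w' := by
        funext i; by_cases hi : i ∈ S <;> simp [hwS, hw', hi]
      -- there is j ∈ S with w j ≠ 0
      obtain ⟨T, hTsub, hTcard⟩ :=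
        Finset.exists_subset_card_eq (s := univ.filter fun i => w i ≠ 0) (n := K) hsmall.le
      have hTpos : 0 < ∑ j ∈ T, |w j| := by
        apply Finset.sum_pos
        · intro j hj
          have := hTsub hj
          simp only [Finset.mem_filter] at this
          exact abs_pos.mpr this.2
        · exact Finset.card_pos.mp (hTcard ▸ hK)
      have hSpos : 0 < ∑ j ∈ S, |w j| := lt_of_lt_of_le hTpos (hSmax T hTcard)
      obtain ⟨j, hjS, hjne⟩ : ∃ j ∈ S, w j ≠ 0 := by
        by_contra hcon
        push_neg at hcon
        have : ∑ j ∈ S, |w j| = 0 :=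
          Finset.sum_eq_zero fun j hj => by rw [hcon j hj, abs_zero]
        linarith
      have hsupp' : ((univ : Finset (Fin n)).filter fun i => w' i ≠ 0).card ≤ N := by
        have hsub : ((univ : Finset (Fin n)).filter fun i => w' i ≠ 0) ⊆
            ((univ : Finset (Fin n)).filter fun i => w i ≠ 0).erase j := by
          intro i hi
          simp only [Finset.mem_filter, hw'] at hi
          by_cases hiS : i ∈ S
          · simp [hiS] at hi
          · refine Finset.mem_erase.mpr ⟨fun h => hiS (h ▸ hjS), ?_⟩
            simp only [Finset.mem_filter]
            exact ⟨Finset.mem_univ i, by simpa [hiS] using hi.2⟩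
        have hjmem : j ∈ ((univ : Finset (Fin n)).filter fun i => w i ≠ 0) := by simp [hjne]
        calc _ ≤ (((univ : Finset (Fin n)).filter fun i => w i ≠ 0).erase j).card :=
              Finset.card_le_card hsub
          _ = ((univ : Finset (Fin n)).filter fun i => w i ≠ 0).card - 1 :=
              Finset.card_erase_of_mem hjmem
          _ ≤ N := by omega
      set c' : ℝ := (∑ j ∈ S, |w j|) / K with hc'
      have hc'0 : 0 ≤ c' := div_nonneg hSpos.le (Nat.cast_nonneg K)
      have hbd' : ∀ i, |w' i| ≤ c' := by
        intro i
        by_cases hiS : i ∈ S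
        · simp only [hw', hiS, if_true, abs_zero]
          exact hc'0
        · have h1 : (K:ℝ) * |w i| ≤ ∑ j ∈ S, |w j| := by
            calc (K:ℝ) * |w i| = ∑ _j ∈ S, |w i| := by
                  rw [Finset.sum_const, hScard, nsmul_eq_mul]
              _ ≤ ∑ j ∈ S, |w j| := Finset.sum_le_sum fun j hj => hStop i hiS j hj
          have h2 : |w i| ≤ c' := by
            rw [hc', le_div_iff₀ (by exact_mod_cast hK)]
            linarith
          simpa [hw', hiS] using h2
      have ihw' := ih w' hsupp' c' hc'0 hbd'
      have hwSbd : l2 (A.mulVec wS) ≤ subNorm A K * (Real.sqrt K * c) := by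
        have hsp : IsSparse K wS := ⟨S, hScard.le, fun i hi => by simp [hwS, hi]⟩
        have h2 : l2 wS ≤ Real.sqrt K * c := by
          have hb : ∀ i, |wS i| ≤ c := by
            intro i
            by_cases hi : i ∈ S
            · simpa [hwS, hi] using hbd i
            · simpa [hwS, hi] using hc
          have := l2_le_sqrt_card wS S (fun i hi => by simp [hwS, hi]) c hc hb
          rwa [hScard] at this
        calc l2 (A.mulVec wS) ≤ subNorm A K * l2 wS := l2_mulVec_sparse A hKn hsp
          _ ≤ _ := mul_le_mul_of_nonneg_left h2 (subNorm_nonneg A hKn)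
      have hl1S : l1 wS = ∑ j ∈ S, |w j| := by
        simp only [l1, hwS]
        rw [← Finset.sum_subset (Finset.subset_univ S) (fun i _ hi => by simp [hi])]
        exact Finset.sum_congr rfl fun i hi => by simp [hi]
      have hl1 : l1 w = l1 wS + l1 w' := by
        simp only [l1, hwS, hw', ← Finset.sum_add_distrib]
        exact Finset.sum_congr rfl fun i _ => by by_cases hi : i ∈ S <;> simp [hi]
      have hKsq : Real.sqrt K * Real.sqrt K = (K:ℝ) := Real.mul_self_sqrt (Nat.cast_nonneg K)
      have hdiv : Real.sqrt K * c' = (∑ j ∈ S, |w j|) / Real.sqrt K := by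
        rw [hc']
        calc Real.sqrt K * ((∑ j ∈ S, |w j|) / K)
            = (Real.sqrt K * (∑ j ∈ S, |w j|)) / (Real.sqrt K * Real.sqrt K) := by
              rw [hKsq, mul_div_assoc]
          _ = (∑ j ∈ S, |w j|) / Real.sqrt K := mul_div_mul_left _ _ hsqK.ne'
      have hkey : Real.sqrt K * c' + l1 w' / Real.sqrt K = l1 w / Real.sqrt K := by
        rw [hdiv, ← add_div, hl1, hl1S]
      calc l2 (A.mulVec w) = l2 (A.mulVec wS + A.mulVec w') := by
            rw [hsplit, Matrix.mulVec_add]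
        _ ≤ l2 (A.mulVec wS) + l2 (A.mulVec w') := l2_add_le _ _
        _ ≤ subNorm A K * (Real.sqrt K * c) +
              subNorm A K * (Real.sqrt K * c' + l1 w' / Real.sqrt K) := add_le_add hwSbd ihw'
        _ = subNorm A K * (Real.sqrt K * c + l1 w / Real.sqrt K) := by rw [hkey]; ring

lemma l2_mulVec_le_main {m n : ℕ} (A : Matrix (Fin m) (Fin n) ℝ) {K : ℕ} (hK : 0 < K)
    (hKn : K ≤ n) (w : Fin n → ℝ) :
    l2 (A.mulVec w) ≤ subNorm A K * (l2 w + l1 w / Real.sqrt K) := by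
  have hsqK : (0:ℝ) < Real.sqrt K := Real.sqrt_pos.mpr (by exact_mod_cast hK)
  by_cases hsmall : ((univ : Finset (Fin n)).filter fun i => w i ≠ 0).card ≤ K
  · have hsp : IsSparse K w := ⟨_, hsmall, fun i hi => by simpa using hi⟩
    have h3 : 0 ≤ l1 w / Real.sqrt K := div_nonneg (l1_nonneg w) hsqK.le
    calc l2 (A.mulVec w) ≤ subNorm A K * l2 w := l2_mulVec_sparse A hKn hsp
      _ ≤ subNorm A K * (l2 w + l1 w / Real.sqrt K) := by
          apply mul_le_mul_of_nonneg_left _ (subNorm_nonneg A hKn)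
          linarith
  · push_neg at hsmall
    obtain ⟨S, hScard, hStop, hSmax⟩ := exists_topK hKn w
    set wS : Fin n → ℝ := fun i => if i ∈ S then w i else 0 with hwS
    set w' : Fin n → ℝ := fun i => if i ∈ S then 0 else w i with hw'
    have hsplit : w = wS + w' := by
      funext i; by_cases hi : i ∈ S <;> simp [hwS, hw', hi]
    obtain ⟨T, hTsub, hTcard⟩ :=
      Finset.exists_subset_card_eq (s := univ.filter fun i => w i ≠ 0) (n := K) hsmall.le
    have hTpos : 0 < ∑ j ∈ T, |w j| := by
      apply Finset.sum_pos
      · intro j hj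
        have := hTsub hj
        simp only [Finset.mem_filter] at this
        exact abs_pos.mpr this.2
      · exact Finset.card_pos.mp (hTcard ▸ hK)
    have hSpos : 0 < ∑ j ∈ S, |w j| := lt_of_lt_of_le hTpos (hSmax T hTcard)
    set c' : ℝ := (∑ j ∈ S, |w j|) / K with hc'
    have hc'0 : 0 ≤ c' := div_nonneg hSpos.le (Nat.cast_nonneg K)
    have hbd' : ∀ i, |w' i| ≤ c' := by
      intro i
      by_cases hiS : i ∈ S
      · simp only [hw', hiS, if_true, abs_zero]
        exact hc'0
      · have h1 : (K:ℝ) * |w i| ≤ ∑ j ∈ S, |w j| := by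
          calc (K:ℝ) * |w i| = ∑ _j ∈ S, |w i| := by
                rw [Finset.sum_const, hScard, nsmul_eq_mul]
            _ ≤ ∑ j ∈ S, |w j| := Finset.sum_le_sum fun j hj => hStop i hiS j hj
        have h2 : |w i| ≤ c' := by
          rw [hc', le_div_iff₀ (by exact_mod_cast hK)]
          linarith
        simpa [hw', hiS] using h2
    have hsupp' : ((univ : Finset (Fin n)).filter fun i => w' i ≠ 0).card ≤ n :=
      le_trans (Finset.card_filter_le _ _) (by simp)
    have ihw' := lemB A hK hKn n w' hsupp' c' hc'0 hbd'
    have hwSbd : l2 (A.mulVec wS) ≤ subNorm A K * l2 w := by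
      have hsp : IsSparse K wS := ⟨S, hScard.le, fun i hi => by simp [hwS, hi]⟩
      calc l2 (A.mulVec wS) ≤ subNorm A K * l2 wS := l2_mulVec_sparse A hKn hsp
        _ ≤ subNorm A K * l2 w :=
            mul_le_mul_of_nonneg_left (l2_restrict_le w S) (subNorm_nonneg A hKn)
    have hl1S : l1 wS = ∑ j ∈ S, |w j| := by
      simp only [l1, hwS]
      rw [← Finset.sum_subset (Finset.subset_univ S) (fun i _ hi => by simp [hi])]
      exact Finset.sum_congr rfl fun i hi => by simp [hi]
    have hl1 : l1 w = l1 wS + l1 w' := by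
      simp only [l1, hwS, hw', ← Finset.sum_add_distrib]
      exact Finset.sum_congr rfl fun i _ => by by_cases hi : i ∈ S <;> simp [hi]
    have hKsq : Real.sqrt K * Real.sqrt K = (K:ℝ) := Real.mul_self_sqrt (Nat.cast_nonneg K)
    have hdiv : Real.sqrt K * c' = (∑ j ∈ S, |w j|) / Real.sqrt K := by
      rw [hc']
      calc Real.sqrt K * ((∑ j ∈ S, |w j|) / K)
          = (Real.sqrt K * (∑ j ∈ S, |w j|)) / (Real.sqrt K * Real.sqrt K) := by
            rw [hKsq, mul_div_assoc]
        _ = (∑ j ∈ S, |w j|) / Real.sqrt K := mul_div_mul_left _ _ hsqK.ne'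
    have hkey : Real.sqrt K * c' + l1 w' / Real.sqrt K = l1 w / Real.sqrt K := by
      rw [hdiv, ← add_div, hl1, hl1S]
    calc l2 (A.mulVec w) = l2 (A.mulVec wS + A.mulVec w') := by
          rw [hsplit, Matrix.mulVec_add]
      _ ≤ l2 (A.mulVec wS) + l2 (A.mulVec w') := l2_add_le _ _
      _ ≤ subNorm A K * l2 w +
            subNorm A K * (Real.sqrt K * c' + l1 w' / Real.sqrt K) := add_le_add hwSbd ihw'
      _ = subNorm A K * (l2 w + l1 w / Real.sqrt K) := by rw [hkey]; ring

lemma bestApprox_l2_le {n K : ℕ} {s sK : Fin n → ℝ} (hbest : IsBestApprox K s sK) :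
    l2 sK ≤ l2 s := by
  obtain ⟨⟨S, hcard, hsupp⟩, hmin⟩ := hbest
  set t : Fin n → ℝ := fun i => if i ∈ S then s i else 0 with ht
  have hts : IsSparse K t := ⟨S, hcard, fun i hi => by simp [ht, hi]⟩
  have h1 := hmin t hts
  have hsq : ∑ i, (s i - sK i) ^ 2 ≤ ∑ i, (s i - t i) ^ 2 := by
    have h2 := pow_le_pow_left₀ (l2_nonneg _) h1 2
    rw [l2_sq, l2_sq] at h2
    simpa using h2
  have hg : ∀ i, 0 ≤ (s i - sK i) ^ 2 - (s i - t i) ^ 2 := by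
    intro i
    by_cases hi : i ∈ S
    · simp [ht, hi]
      positivity
    · simp [ht, hi, hsupp i hi]
  have hsum0 : ∑ i, ((s i - sK i) ^ 2 - (s i - t i) ^ 2) = 0 := by
    have hle : ∑ i, ((s i - sK i) ^ 2 - (s i - t i) ^ 2) ≤ 0 := by
      rw [Finset.sum_sub_distrib]; linarith
    have hge : 0 ≤ ∑ i, ((s i - sK i) ^ 2 - (s i - t i) ^ 2) :=
      Finset.sum_nonneg fun i _ => hg i
    linarith
  have heach := (Finset.sum_eq_zero_iff_of_nonneg (fun i _ => hg i)).mp hsum0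
  have heq : ∀ i ∈ S, sK i = s i := by
    intro i hi
    have := heach i (Finset.mem_univ i)
    simp only [ht, hi, if_true, sub_self] at this
    have h3 : (s i - sK i) ^ 2 = 0 := by linarith [this]
    have := pow_eq_zero_iff (n := 2) (by norm_num) |>.mp h3
    linarith [this]
  apply Real.sqrt_le_sqrt
  apply Finset.sum_le_sum
  intro i _
  by_cases hi : i ∈ S
  · rw [heq i hi]
  · rw [hsupp i hi]
    simpa using sq_nonneg (s i)

/-- Bound on the total error term `ẽ = e - E s_K + A s_K^c`:
`‖ẽ‖₂ ≤ ‖A‖₂^{(K)}‖s‖₂·(ε_y + ε_A^{(K)} + (1+ε_y)(r_K + s_K'))`. -/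
theorem stmt13 {m n : ℕ} (A E : Matrix (Fin m) (Fin n) ℝ) (K : ℕ) (hK : 0 < K) (hKn : K ≤ n)
    (δ : ℝ) (h : SatisfiesRIP A K δ) (s : Fin n → ℝ) (hs : s ≠ 0) (sK : Fin n → ℝ)
    (hbest : IsBestApprox K s sK) (e : Fin m → ℝ) (εy : ℝ) (hεy : 0 ≤ εy)
    (he : l2 e = εy * l2 (A.mulVec s)) (hA : 0 < subNorm A K) :
    l2 (e - E.mulVec sK + A.mulVec (s - sK)) ≤
      subNorm A K * l2 s *
        (εy + subNorm E K / subNorm A K +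
          (1 + εy) * (l2 (s - sK) / l2 s + l1 (s - sK) / (Real.sqrt K * l2 s))) := by
  have hL : 0 < l2 s := l2_pos hs
  have hR : (0:ℝ) < Real.sqrt K := Real.sqrt_pos.mpr (by exact_mod_cast hK)
  have hDnn : 0 ≤ subNorm A K := hA.le
  have hEnn : 0 ≤ subNorm E K := subNorm_nonneg E hKn
  -- key bounds
  have hX : l2 (A.mulVec (s - sK)) ≤ subNorm A K * (l2 (s - sK) + l1 (s - sK) / Real.sqrt K) :=    l2_mulVec_le_main A hK hKn (s - sK)
  have hsK2 : l2 sK ≤ l2 s := bestApprox_l2_le hbest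
  have hEsk : l2 (E.mulVec sK) ≤ subNorm E K * l2 s :=
    le_trans (l2_mulVec_sparse E hKn hbest.1)
      (mul_le_mul_of_nonneg_left hsK2 hEnn)
  have hAsk : l2 (A.mulVec sK) ≤ subNorm A K * l2 s :=
    le_trans (l2_mulVec_sparse A hKn hbest.1)
      (mul_le_mul_of_nonneg_left hsK2 hDnn)
  have hsum : sK + (s - sK) = s := by abel
  have hAs : l2 (A.mulVec s) ≤ l2 (A.mulVec sK) + l2 (A.mulVec (s - sK)) := by
    calc l2 (A.mulVec s) = l2 (A.mulVec sK + A.mulVec (s - sK)) := by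
          rw [← Matrix.mulVec_add, hsum]
      _ ≤ _ := l2_add_le _ _
  have he' : l2 e ≤ εy * (subNorm A K * l2 s +
      subNorm A K * (l2 (s - sK) + l1 (s - sK) / Real.sqrt K)) := by
    rw [he]
    apply mul_le_mul_of_nonneg_left _ hεy
    calc l2 (A.mulVec s) ≤ l2 (A.mulVec sK) + l2 (A.mulVec (s - sK)) := hAs
      _ ≤ _ := add_le_add hAsk hX
  have htri : l2 (e - E.mulVec sK + A.mulVec (s - sK)) ≤
      l2 e + l2 (E.mulVec sK) + l2 (A.mulVec (s - sK)) := by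
    calc l2 (e - E.mulVec sK + A.mulVec (s - sK))
        ≤ l2 (e - E.mulVec sK) + l2 (A.mulVec (s - sK)) := l2_add_le _ _
      _ ≤ l2 e + l2 (E.mulVec sK) + l2 (A.mulVec (s - sK)) := by
          have := l2_sub_le e (E.mulVec sK)
          linarith
  have hrhs : subNorm A K * l2 s *
      (εy + subNorm E K / subNorm A K +
        (1 + εy) * (l2 (s - sK) / l2 s + l1 (s - sK) / (Real.sqrt K * l2 s))) =
      εy * (subNorm A K * l2 s) + subNorm E K * l2 s +
        (1 + εy) * (subNorm A K * (l2 (s - sK) + l1 (s - sK) / Real.sqrt K)) := by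
    field_simp
  rw [hrhs]
  have hXnn : 0 ≤ subNorm A K * (l2 (s - sK) + l1 (s - sK) / Real.sqrt K) := by
    have h1 : 0 ≤ l2 (s - sK) := l2_nonneg _
    have h2 : 0 ≤ l1 (s - sK) / Real.sqrt K := div_nonneg (l1_nonneg _) hR.le
    positivity
  nlinarith [hεy, hX, hEsk, he', htri]
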